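/- Let W = R_𝔥(θ)U*R_𝔨(φ)U be the single-step QSVT operator, and let σ ∈ (0,1), AA*f_σ = σ²f_σ, σ = cos k. Let λ satisfy cos λ = cos θ cos φ − sin θ sin φ cos 2k with sin λ ≠ 0, and suppose e^{±iλ} ≠ e^{i(φ−θ)} and e^{±iλ} ≠ e^{−i(θ+φ)}. Then the vectors v_± := (A*/(1 − e^{i(φ−θ)}e^{±iλ})) f_σ ⊕ (B*/(1 − e^{i(θ+φ)}e^{±iλ})) f_σ satisfy W v_± = e^{±iλ} v_±, i.e., they are eigenvectors of W with eigenvalues e^{±iλ}. -/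

import Mathlib

private lemma scalar_key19 (p p' q q' μ s : ℂ)
    (hp : p * p' = 1) (hq : q * q' = 1)
    (h1 : 1 - p*μ ≠ 0) (h2 : 1 - q*μ ≠ 0)
    (hμ : (μ^2 + 1) * (p*q) = (s*(q^2*p + p) + (1-s)*(p^2*q + q)) * μ) :
    (q * ((1-p*μ)⁻¹ * s + (1-q*μ)⁻¹*(1-s)) + p' * ((1-p*μ)⁻¹ - (1-q*μ)⁻¹) * (1-s)
      = μ * (1-p*μ)⁻¹) ∧
    (p * ((1-p*μ)⁻¹ * s + (1-q*μ)⁻¹*(1-s)) - q' * ((1-p*μ)⁻¹ - (1-q*μ)⁻¹) * s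
      = μ * (1-q*μ)⁻¹) := by
  have hp0 : p ≠ 0 := left_ne_zero_of_mul_eq_one hp
  have hq0 : q ≠ 0 := left_ne_zero_of_mul_eq_one hq
  have hp' : p' = p⁻¹ := eq_inv_of_mul_eq_one_left (by linear_combination hp)
  have hq' : q' = q⁻¹ := eq_inv_of_mul_eq_one_left (by linear_combination hq)
  subst hp' hq'
  constructor
  · field_simp
    linear_combination hμ
  · have h2' : 1 - μ*q ≠ 0 := by rwa [mul_comm]
    field_simp
    linear_combination hμ

private lemma hmu_of19 (p p' q q' μ μ' cl cp cq s : ℂ)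
    (hp : p*p' = 1) (hq : q*q' = 1) (hm : μ*μ' = 1)
    (hsp : p + p' = 2*cp) (hsq : q + q' = 2*cq) (hsm : μ + μ' = 2*cl)
    (hkey : cl = s*cq + (1-s)*cp) :
    (μ^2+1)*(p*q) = (s*(q^2*p + p) + (1-s)*(p^2*q + q))*μ := by
  linear_combination (p*q*μ)*hsm - (p*q*μ*s)*hsq - (p*q*μ*(1-s))*hsp - (p*q)*hm
    + (μ*s*p)*hq + (μ*(1-s)*q)*hp + (2*p*q*μ)*hkey

private lemma exp_prod19 (x y : ℂ) (h : x + y = 0) :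
    Complex.exp (x * Complex.I) * Complex.exp (y * Complex.I) = 1 := by
  rw [← Complex.exp_add, show x*Complex.I + y*Complex.I = (x+y)*Complex.I by ring, h,
    zero_mul, Complex.exp_zero]

private lemma exp_sum19 (x y : ℝ) (h : y = -x) :
    Complex.exp (x * Complex.I) + Complex.exp ((y:ℂ) * Complex.I) = 2 * Real.cos x := by
  subst h
  rw [Complex.exp_mul_I, show ((-x : ℝ) : ℂ) = -(x:ℂ) by push_cast; ring, Complex.exp_mul_I,
    Complex.cos_neg, Complex.sin_neg, ← Complex.ofReal_cos, ← Complex.ofReal_sin]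
  ring

set_option maxHeartbeats 1000000 in
open ContinuousLinearMap Complex Submodule Polynomial in
theorem stmt19
    {H : Type*} [NormedAddCommGroup H] [InnerProductSpace ℂ H] [CompleteSpace H]
    (𝔥 𝔨 : Submodule ℂ H) [CompleteSpace 𝔥] [CompleteSpace 𝔨]
    (U : H →L[ℂ] H) (hU1 : adjoint U ∘L U = 1) (hU2 : U ∘L adjoint U = 1)
    (A : 𝔥 →L[ℂ] 𝔨) (B : 𝔥ᗮ →L[ℂ] 𝔨) (C : 𝔥 →L[ℂ] 𝔨ᗮ) (D : 𝔥ᗮ →L[ℂ] 𝔨ᗮ)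
    (hA : ∀ x : 𝔥, A x = orthogonalProjection 𝔨 (U x))
    (hB : ∀ y : 𝔥ᗮ, B y = orthogonalProjection 𝔨 (U y))
    (hC : ∀ x : 𝔥, C x = orthogonalProjection 𝔨ᗮ (U x))
    (hD : ∀ y : 𝔥ᗮ, D y = orthogonalProjection 𝔨ᗮ (U y))
    (θ φ k : ℝ) (σ : ℝ) (hσ : σ = Real.cos k) (hσmem : σ ∈ Set.Ioo (0 : ℝ) 1)
    (fσ : 𝔨) (hfnorm : ‖fσ‖ = 1)
    (hf : A (adjoint A fσ) = ((σ : ℂ) ^ 2) • fσ)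
    (W : H →L[ℂ] H)
    (hW : W = (Complex.exp (θ * Complex.I) • (𝔥.subtypeL ∘L orthogonalProjection 𝔥) +
          Complex.exp (-θ * Complex.I) • (1 - 𝔥.subtypeL ∘L orthogonalProjection 𝔥)) ∘L
        (adjoint U ∘L
          ((Complex.exp (φ * Complex.I) • (𝔨.subtypeL ∘L orthogonalProjection 𝔨) +
            Complex.exp (-φ * Complex.I) • (1 - 𝔨.subtypeL ∘L orthogonalProjection 𝔨)) ∘L U)))
    (lam : ℝ)
    (hcos : Real.cos lam = Real.cos θ * Real.cos φ - Real.sin θ * Real.sin φ * Real.cos (2 * k))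
    (hsin : Real.sin lam ≠ 0)
    (hne1p : Complex.exp (lam * Complex.I) * Complex.exp ((φ - θ) * Complex.I) ≠ 1)
    (hne1m : Complex.exp (-lam * Complex.I) * Complex.exp ((φ - θ) * Complex.I) ≠ 1)
    (hne2p : Complex.exp (lam * Complex.I) * Complex.exp (-(θ + φ) * Complex.I) ≠ 1)
    (hne2m : Complex.exp (-lam * Complex.I) * Complex.exp (-(θ + φ) * Complex.I) ≠ 1) :
    (W ((1 - Complex.exp ((φ - θ) * Complex.I) * Complex.exp (lam * Complex.I))⁻¹ •
          ((adjoint A fσ : 𝔥) : H) +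
        (1 - Complex.exp ((θ + φ) * Complex.I) * Complex.exp (lam * Complex.I))⁻¹ •
          ((adjoint B fσ : 𝔥ᗮ) : H)) =
      Complex.exp (lam * Complex.I) •
        ((1 - Complex.exp ((φ - θ) * Complex.I) * Complex.exp (lam * Complex.I))⁻¹ •
            ((adjoint A fσ : 𝔥) : H) +
          (1 - Complex.exp ((θ + φ) * Complex.I) * Complex.exp (lam * Complex.I))⁻¹ •
            ((adjoint B fσ : 𝔥ᗮ) : H))) ∧
    (W ((1 - Complex.exp ((φ - θ) * Complex.I) * Complex.exp (-lam * Complex.I))⁻¹ •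
          ((adjoint A fσ : 𝔥) : H) +
        (1 - Complex.exp ((θ + φ) * Complex.I) * Complex.exp (-lam * Complex.I))⁻¹ •
          ((adjoint B fσ : 𝔥ᗮ) : H)) =
      Complex.exp (-lam * Complex.I) •
        ((1 - Complex.exp ((φ - θ) * Complex.I) * Complex.exp (-lam * Complex.I))⁻¹ •
            ((adjoint A fσ : 𝔥) : H) +
          (1 - Complex.exp ((θ + φ) * Complex.I) * Complex.exp (-lam * Complex.I))⁻¹ •
            ((adjoint B fσ : 𝔥ᗮ) : H))) := by
  set a : 𝔥 := adjoint A fσ with ha_def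
  set b : 𝔥ᗮ := adjoint B fσ with hb_def
  -- unitarity pointwise
  have hUadjU : ∀ z : H, adjoint U (U z) = z := by
    intro z
    have h := congrArg (fun T : H →L[ℂ] H => T z) hU1
    simpa using h
  have hUUadj : ∀ z : H, U (adjoint U z) = z := by
    intro z
    have h := congrArg (fun T : H →L[ℂ] H => T z) hU2
    simpa using h
  -- adjoint block identification
  have hAop : A = (orthogonalProjection 𝔨) ∘L (U ∘L 𝔥.subtypeL) := by
    ext x; rw [hA x]; rfl
  have hBop : B = (orthogonalProjection 𝔨) ∘L (U ∘L (𝔥ᗮ).subtypeL) := by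
    ext y; rw [hB y]; rfl
  have haP : a = orthogonalProjection 𝔥 (adjoint U ↑fσ) := by
    rw [ha_def, hAop, adjoint_comp, adjoint_comp, Submodule.adjoint_orthogonalProjection,
      Submodule.adjoint_subtypeL]
    rfl
  have hbP : b = orthogonalProjection 𝔥ᗮ (adjoint U ↑fσ) := by
    rw [hb_def, hBop, adjoint_comp, adjoint_comp, Submodule.adjoint_orthogonalProjection,
      Submodule.adjoint_subtypeL]
    rfl
  have hdecomp : (↑a : H) + ↑b = adjoint U ↑fσ := by
    rw [haP, hbP]
    exact Submodule.starProjection_add_starProjection_orthogonal (K := 𝔥) _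
  have hUa : orthogonalProjection 𝔨 (U ↑a) = ((σ:ℂ)^2) • fσ := (hA a).symm.trans hf
  set g : H := U ↑a - ((σ:ℂ)^2) • (↑fσ : H) with hg_def
  have hUa' : U ↑a = ((σ:ℂ)^2) • (↑fσ:H) + g := by rw [hg_def]; module
  have hPkg : orthogonalProjection 𝔨 g = 0 := by
    rw [hg_def, map_sub, map_smul, hUa, orthogonalProjection_mem_subspace_eq_self, sub_self]
  have hUb : U ↑b = (1 - (σ:ℂ)^2) • (↑fσ:H) - g := by
    have h1 : U ↑a + U ↑b = ↑fσ := by rw [← map_add, hdecomp]; exact hUUadj _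
    have h2 : U ↑b = (↑fσ : H) - U ↑a := by rw [← h1]; abel
    rw [h2, hUa']; module
  have hUadjfσ : adjoint U ↑fσ = (↑a : H) + ↑b := hdecomp.symm
  have hUadjg : adjoint U g = (1-(σ:ℂ)^2) • (↑a:H) - ((σ:ℂ)^2) • (↑b:H) := by
    rw [hg_def, map_sub, map_smul, hUadjU, hUadjfσ]; module
  -- the main eigenvector computation for abstract scalars
  have main : ∀ μ α β : ℂ,
      Complex.exp ((θ:ℂ)*Complex.I) * (Complex.exp ((φ:ℂ)*Complex.I) * (α*(σ:ℂ)^2 + β*(1-(σ:ℂ)^2))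
        + Complex.exp (-(φ:ℂ)*Complex.I) * (α-β) * (1-(σ:ℂ)^2)) = μ * α →
      Complex.exp (-(θ:ℂ)*Complex.I) * (Complex.exp ((φ:ℂ)*Complex.I) * (α*(σ:ℂ)^2 + β*(1-(σ:ℂ)^2))
        - Complex.exp (-(φ:ℂ)*Complex.I) * (α-β) * (σ:ℂ)^2) = μ * β →
      W (α • (↑a:H) + β • ↑b) = μ • (α • (↑a:H) + β • ↑b) := by
    intro μ α β hE1 hE2
    have hUv : U (α • (↑a:H) + β • ↑b)
        = (α*(σ:ℂ)^2 + β*(1-(σ:ℂ)^2)) • (↑fσ:H) + (α-β) • g := by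
      rw [map_add, map_smul, map_smul, hUa', hUb]; module
    have hPkUv : (↑(orthogonalProjection 𝔨 (U (α • (↑a:H) + β • ↑b))) : H)
        = (α*(σ:ℂ)^2 + β*(1-(σ:ℂ)^2)) • (↑fσ:H) := by
      rw [hUv, map_add, map_smul, map_smul, hPkg, orthogonalProjection_mem_subspace_eq_self]
      simp
    have hPh_b : orthogonalProjection 𝔥 ((↑b:H)) = 0 :=
      Submodule.orthogonalProjectionOnto_apply_of_mem_orthogonal b.2
    rw [hW]
    simp only [ContinuousLinearMap.comp_apply, ContinuousLinearMap.add_apply,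
      ContinuousLinearMap.smul_apply, ContinuousLinearMap.sub_apply,
      ContinuousLinearMap.one_apply, Submodule.subtypeL_apply]
    rw [hPkUv, hUv]
    have hsimp : Complex.exp ((φ:ℂ)*Complex.I) • ((α*(σ:ℂ)^2 + β*(1-(σ:ℂ)^2)) • (↑fσ:H))
        + Complex.exp (-(φ:ℂ)*Complex.I) • ((α*(σ:ℂ)^2 + β*(1-(σ:ℂ)^2)) • (↑fσ:H) + (α-β) • g
            - (α*(σ:ℂ)^2 + β*(1-(σ:ℂ)^2)) • (↑fσ:H))
        = (Complex.exp ((φ:ℂ)*Complex.I)*(α*(σ:ℂ)^2 + β*(1-(σ:ℂ)^2))) • (↑fσ:H)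
          + (Complex.exp (-(φ:ℂ)*Complex.I)*(α-β)) • g := by module
    rw [hsimp]
    have hadj : adjoint U ((Complex.exp ((φ:ℂ)*Complex.I)*(α*(σ:ℂ)^2 + β*(1-(σ:ℂ)^2))) • (↑fσ:H)
          + (Complex.exp (-(φ:ℂ)*Complex.I)*(α-β)) • g)
        = (Complex.exp ((φ:ℂ)*Complex.I)*(α*(σ:ℂ)^2 + β*(1-(σ:ℂ)^2))
            + Complex.exp (-(φ:ℂ)*Complex.I)*(α-β)*(1-(σ:ℂ)^2)) • (↑a:H)
          + (Complex.exp ((φ:ℂ)*Complex.I)*(α*(σ:ℂ)^2 + β*(1-(σ:ℂ)^2))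
            - Complex.exp (-(φ:ℂ)*Complex.I)*(α-β)*(σ:ℂ)^2) • (↑b:H) := by
      rw [map_add, map_smul, map_smul, hUadjfσ, hUadjg]; module
    rw [hadj]
    have hPh : (↑(orthogonalProjection 𝔥
        ((Complex.exp ((φ:ℂ)*Complex.I)*(α*(σ:ℂ)^2 + β*(1-(σ:ℂ)^2))
            + Complex.exp (-(φ:ℂ)*Complex.I)*(α-β)*(1-(σ:ℂ)^2)) • (↑a:H)
          + (Complex.exp ((φ:ℂ)*Complex.I)*(α*(σ:ℂ)^2 + β*(1-(σ:ℂ)^2))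
            - Complex.exp (-(φ:ℂ)*Complex.I)*(α-β)*(σ:ℂ)^2) • (↑b:H))) : H)
        = (Complex.exp ((φ:ℂ)*Complex.I)*(α*(σ:ℂ)^2 + β*(1-(σ:ℂ)^2))
            + Complex.exp (-(φ:ℂ)*Complex.I)*(α-β)*(1-(σ:ℂ)^2)) • (↑a:H) := by
      rw [map_add, map_smul, map_smul, hPh_b, orthogonalProjection_mem_subspace_eq_self]
      simp
    rw [hPh]
    match_scalars
    · linear_combination hE1
    · linear_combination hE2
  -- trigonometric key identity
  have hkeyR : Real.cos lam = σ^2 * Real.cos (θ+φ) + (1-σ^2) * Real.cos (φ-θ) := by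
    rw [hcos, Real.cos_two_mul, Real.cos_add, Real.cos_sub, hσ]; ring
  have hkeyC : (Real.cos lam : ℂ)
      = (σ:ℂ)^2 * (Real.cos (θ+φ) : ℂ) + (1-(σ:ℂ)^2) * (Real.cos (φ-θ) : ℂ) := by
    exact_mod_cast congrArg (fun r : ℝ => (r : ℂ)) hkeyR
  -- exponential bookkeeping
  have hcast1 : ((φ:ℂ) - (θ:ℂ)) = ((φ - θ : ℝ) : ℂ) := by push_cast; ring
  have hcast2 : ((θ:ℂ) - (φ:ℂ)) = ((θ - φ : ℝ) : ℂ) := by push_cast; ring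
  have hcast3 : ((θ:ℂ) + (φ:ℂ)) = ((θ + φ : ℝ) : ℂ) := by push_cast; ring
  have hcast4 : (-((θ:ℂ) + (φ:ℂ))) = ((-(θ + φ) : ℝ) : ℂ) := by push_cast; ring
  have hcast5 : (-(lam:ℂ)) = ((-lam : ℝ) : ℂ) := by push_cast; ring
  set p : ℂ := Complex.exp (((φ:ℂ) - θ) * Complex.I) with hp_def
  set p' : ℂ := Complex.exp (((θ:ℂ) - φ) * Complex.I) with hp'_def
  set q : ℂ := Complex.exp (((θ:ℂ) + φ) * Complex.I) with hq_def
  set q' : ℂ := Complex.exp ((-((θ:ℂ) + φ)) * Complex.I) with hq'_def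
  set μp : ℂ := Complex.exp ((lam:ℂ) * Complex.I) with hmp_def
  set μm : ℂ := Complex.exp ((-(lam:ℂ)) * Complex.I) with hmm_def
  have hpp' : p * p' = 1 := exp_prod19 _ _ (by ring)
  have hqq' : q * q' = 1 := exp_prod19 _ _ (by ring)
  have hμμ : μp * μm = 1 := exp_prod19 _ _ (by ring)
  have hsp : p + p' = 2 * (Real.cos (φ - θ) : ℂ) := by
    rw [hp_def, hp'_def, hcast1, hcast2]; exact exp_sum19 _ _ (by ring)
  have hsq : q + q' = 2 * (Real.cos (θ + φ) : ℂ) := by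
    rw [hq_def, hq'_def, hcast4, hcast3]; exact exp_sum19 _ _ (by ring)
  have hsm : μp + μm = 2 * (Real.cos lam : ℂ) := by
    rw [hmp_def, hmm_def, hcast5]; exact exp_sum19 _ _ (by ring)
  -- products relating e^{iθ}, e^{iφ} with p, q
  have hprod1 : Complex.exp ((θ:ℂ)*Complex.I) * Complex.exp ((φ:ℂ)*Complex.I) = q := by
    rw [hq_def, ← Complex.exp_add]; ring_nf
  have hprod2 : Complex.exp ((θ:ℂ)*Complex.I) * Complex.exp (-(φ:ℂ)*Complex.I) = p' := by
    rw [hp'_def, ← Complex.exp_add]; ring_nf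
  have hprod3 : Complex.exp (-(θ:ℂ)*Complex.I) * Complex.exp ((φ:ℂ)*Complex.I) = p := by
    rw [hp_def, ← Complex.exp_add]; ring_nf
  have hprod4 : Complex.exp (-(θ:ℂ)*Complex.I) * Complex.exp (-(φ:ℂ)*Complex.I) = q' := by
    rw [hq'_def, ← Complex.exp_add]; ring_nf
  -- the two quadratic identities
  have hμP : (μp^2 + 1) * (p*q)
      = ((σ:ℂ)^2*(q^2*p + p) + (1-(σ:ℂ)^2)*(p^2*q + q)) * μp :=
    hmu_of19 p p' q q' μp μm _ _ _ _ hpp' hqq' hμμ hsp hsq hsm hkeyC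
  have hμM : (μm^2 + 1) * (p*q)
      = ((σ:ℂ)^2*(q^2*p + p) + (1-(σ:ℂ)^2)*(p^2*q + q)) * μm :=
    hmu_of19 p p' q q' μm μp _ _ _ _ hpp' hqq' (by linear_combination hμμ) hsp hsq
      (by linear_combination hsm) hkeyC
  -- nonvanishing denominators
  have h1p : 1 - p*μp ≠ 0 := sub_ne_zero.mpr (fun h => hne1p (by linear_combination -h))
  have h2p : 1 - q*μp ≠ 0 :=
    sub_ne_zero.mpr (fun h => hne2m (by linear_combination (μp*μm)*hqq' + hμμ + (μm*q')*h))
  have h1m : 1 - p*μm ≠ 0 := sub_ne_zero.mpr (fun h => hne1m (by linear_combination -h))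
  have h2m : 1 - q*μm ≠ 0 :=
    sub_ne_zero.mpr (fun h => hne2p (by linear_combination (μp*μm)*hqq' + hμμ + (μp*q')*h))
  obtain ⟨SK1p, SK2p⟩ := scalar_key19 p p' q q' μp ((σ:ℂ)^2) hpp' hqq' h1p h2p hμP
  obtain ⟨SK1m, SK2m⟩ := scalar_key19 p p' q q' μm ((σ:ℂ)^2) hpp' hqq' h1m h2m hμM
  constructor
  · exact main μp ((1 - p*μp)⁻¹) ((1 - q*μp)⁻¹)
      (by linear_combination SK1p
            + ((1 - p*μp)⁻¹*(σ:ℂ)^2 + (1 - q*μp)⁻¹*(1-(σ:ℂ)^2)) * hprod1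
            + (((1 - p*μp)⁻¹ - (1 - q*μp)⁻¹)*(1-(σ:ℂ)^2)) * hprod2)
      (by linear_combination SK2p
            + ((1 - p*μp)⁻¹*(σ:ℂ)^2 + (1 - q*μp)⁻¹*(1-(σ:ℂ)^2)) * hprod3
            - (((1 - p*μp)⁻¹ - (1 - q*μp)⁻¹)*(σ:ℂ)^2) * hprod4)
  · exact main μm ((1 - p*μm)⁻¹) ((1 - q*μm)⁻¹)
      (by linear_combination SK1m
            + ((1 - p*μm)⁻¹*(σ:ℂ)^2 + (1 - q*μm)⁻¹*(1-(σ:ℂ)^2)) * hprod1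
            + (((1 - p*μm)⁻¹ - (1 - q*μm)⁻¹)*(1-(σ:ℂ)^2)) * hprod2)
      (by linear_combination SK2m
            + ((1 - p*μm)⁻¹*(σ:ℂ)^2 + (1 - q*μm)⁻¹*(1-(σ:ℂ)^2)) * hprod3
            - (((1 - p*μm)⁻¹ - (1 - q*μm)⁻¹)*(σ:ℂ)^2) * hprod4)
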